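/- Let $u_0, u_1, \dots, u_s \in \R[Y_1,\dots,Y_\ell]$ be homogeneous polynomials, and let $\mathcal{V} = \{y \in \R^\ell_+ : u_k(y) = 0, k = 1,\dots,s\}$. If $u_0(y) > 0$ for all $y \in \mathcal{V} \setminus \{0\}$, then there exists $p \in \mathbb{Z}_+$ such that $(\sum_{j=1}^\ell y_j)^p u_0(y) = \tau(y) + \theta(y)$, where $\tau$ is a polynomial with all nonnegative coefficients and $\theta$ lies in the ideal generated by $u_1,\dots,u_s$. -/

import Mathlib

open Finset

private lemma abs_prod_sub_prod_le {ι : Type*} (s : Finset ι) (b c : ι → ℝ)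
    (hb : ∀ t ∈ s, |b t| ≤ 1) (hc : ∀ t ∈ s, |c t| ≤ 1) :
    |(∏ t ∈ s, b t) - ∏ t ∈ s, c t| ≤ ∑ t ∈ s, |b t - c t| := by
  induction s using Finset.cons_induction with
  | empty => simp
  | cons a s ha ih =>
    rw [Finset.prod_cons, Finset.prod_cons, Finset.sum_cons]
    have hb' : ∀ t ∈ s, |b t| ≤ 1 := fun t ht => hb t (Finset.mem_cons_of_mem ht)
    have hc' : ∀ t ∈ s, |c t| ≤ 1 := fun t ht => hc t (Finset.mem_cons_of_mem ht)
    have hPb : |∏ t ∈ s, b t| ≤ 1 := by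
      rw [Finset.abs_prod]
      exact Finset.prod_le_one (fun t _ => abs_nonneg _) hb'
    have hca : |c a| ≤ 1 := hc a (Finset.mem_cons_self a s)
    have hsum : (0:ℝ) ≤ ∑ t ∈ s, |b t - c t| := Finset.sum_nonneg fun t _ => abs_nonneg _
    have h1 : |b a * ∏ t ∈ s, b t - c a * ∏ t ∈ s, c t|
        ≤ |(b a - c a) * ∏ t ∈ s, b t| + |c a * ((∏ t ∈ s, b t) - ∏ t ∈ s, c t)| := by
      have : b a * ∏ t ∈ s, b t - c a * ∏ t ∈ s, c t
          = (b a - c a) * ∏ t ∈ s, b t + c a * ((∏ t ∈ s, b t) - ∏ t ∈ s, c t) := by ring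
      rw [this]; exact abs_add_le _ _
    have h2 : |(b a - c a) * ∏ t ∈ s, b t| ≤ |b a - c a| := by
      rw [abs_mul]
      exact mul_le_of_le_one_right (abs_nonneg _) hPb
    have h3 : |c a * ((∏ t ∈ s, b t) - ∏ t ∈ s, c t)| ≤ ∑ t ∈ s, |b t - c t| := by
      rw [abs_mul]
      calc |c a| * |(∏ t ∈ s, b t) - ∏ t ∈ s, c t| ≤ 1 * (∑ t ∈ s, |b t - c t|) :=
        mul_le_mul hca (ih hb' hc') (abs_nonneg _) zero_le_one
      _ = _ := one_mul _
    linarith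

private lemma cast_descFactorial (n k : ℕ) :
    ((n.descFactorial k : ℕ) : ℝ) = ∏ j ∈ Finset.range k, ((n : ℝ) - (j : ℝ)) := by
  rcases le_or_gt k n with h | h
  · rw [Nat.descFactorial_eq_prod_range, Nat.cast_prod]
    refine Finset.prod_congr rfl fun j hj => ?_
    rw [Finset.mem_range] at hj
    have hjn : j ≤ n := le_trans (le_of_lt hj) h
    rw [Nat.cast_sub hjn]
  · rw [Nat.descFactorial_eq_zero_iff_lt.mpr h, Nat.cast_zero]
    symm
    exact Finset.prod_eq_zero (Finset.mem_range.mpr h) (by simp)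

private lemma degree_eq_sum_univ {ℓ : ℕ} (m : Fin ℓ →₀ ℕ) : m.degree = ∑ i, m i := by
  rw [Finsupp.degree]
  exact Finset.sum_subset (Finset.subset_univ _)
    (fun x _ hx => Finsupp.notMem_support_iff.mp hx)

private lemma coeff_sum_X_pow {ℓ : ℕ} (p : ℕ) (m : Fin ℓ →₀ ℕ) :
    MvPolynomial.coeff m ((∑ j, MvPolynomial.X j : MvPolynomial (Fin ℓ) ℝ) ^ p)
      = if ∑ i, m i = p then (Nat.multinomial Finset.univ ⇑m : ℝ) else 0 := by
  classical
  rw [Finset.sum_pow_eq_sum_piAntidiag, MvPolynomial.coeff_sum]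
  have hmono : ∀ k : Fin ℓ → ℕ, (∏ i, (MvPolynomial.X i : MvPolynomial (Fin ℓ) ℝ) ^ k i)
      = MvPolynomial.monomial (Finsupp.equivFunOnFinite.symm k) 1 := by
    intro k
    rw [← MvPolynomial.prod_X_pow_eq_monomial]
    refine (Finset.prod_subset (Finset.subset_univ _) fun x _ hx => ?_).symm
    have h0 : Finsupp.equivFunOnFinite.symm k x = k x := rfl
    rw [Finsupp.notMem_support_iff] at hx
    rw [show k x = 0 from h0 ▸ hx, pow_zero]
  have hterm : ∀ k ∈ Finset.piAntidiag Finset.univ p,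
      MvPolynomial.coeff m ((Nat.multinomial Finset.univ k : MvPolynomial (Fin ℓ) ℝ)
        * ∏ i, MvPolynomial.X i ^ k i)
      = if k = ⇑m then (Nat.multinomial Finset.univ k : ℝ) else 0 := by
    intro k _
    have hC : ((Nat.multinomial Finset.univ k : ℕ) : MvPolynomial (Fin ℓ) ℝ)
        = MvPolynomial.C ((Nat.multinomial Finset.univ k : ℕ) : ℝ) :=
      (map_natCast (MvPolynomial.C : ℝ →+* MvPolynomial (Fin ℓ) ℝ) _).symm
    rw [hmono k, hC, MvPolynomial.coeff_C_mul, MvPolynomial.coeff_monomial]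
    have hcond : (Finsupp.equivFunOnFinite.symm k = m) ↔ k = ⇑m := by
      constructor
      · intro h; rw [← h]; rfl
      · intro h; apply Finsupp.equivFunOnFinite.injective; exact h
    by_cases h : k = ⇑m
    · rw [if_pos (hcond.mpr h), if_pos h, mul_one]
    · rw [if_neg (fun hh => h (hcond.mp hh)), if_neg h, mul_zero]
  rw [Finset.sum_congr rfl hterm, Finset.sum_ite_eq' (Finset.piAntidiag Finset.univ p) (⇑m)
    (fun k => (Nat.multinomial Finset.univ k : ℝ))]
  simp [Finset.mem_piAntidiag]

set_option maxHeartbeats 2000000 in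
private lemma polya_lemma {ℓ : ℕ} (hl : 0 < ℓ) (F : MvPolynomial (Fin ℓ) ℝ) (e : ℕ)
    (hF : F.IsHomogeneous e)
    (hFpos : ∀ x : Fin ℓ → ℝ, (∀ i, 0 ≤ x i) → ∑ i, x i = 1 → 0 < MvPolynomial.eval x F) :
    ∃ p : ℕ, ∀ m : Fin ℓ →₀ ℕ,
      0 ≤ MvPolynomial.coeff m ((∑ j, MvPolynomial.X j : MvPolynomial (Fin ℓ) ℝ) ^ p * F) := by
  classical
  set Δ : Set (Fin ℓ → ℝ) := {x | (∀ i, 0 ≤ x i) ∧ ∑ i, x i = 1} with hΔdef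
  have hΔne : Δ.Nonempty := by
    refine ⟨fun _ => (ℓ : ℝ)⁻¹, fun i => by positivity, ?_⟩
    rw [Finset.sum_const, Finset.card_univ, Fintype.card_fin, nsmul_eq_mul]
    exact mul_inv_cancel₀ (by exact_mod_cast hl.ne')
  have hΔclosed : IsClosed Δ := by
    have hset : Δ = (⋂ i, {x : Fin ℓ → ℝ | 0 ≤ x i}) ∩ {x | ∑ i, x i = 1} := by
      ext x; simp [hΔdef, Set.mem_iInter]
    rw [hset]
    exact IsClosed.inter
      (isClosed_iInter fun i => isClosed_le continuous_const (continuous_apply i))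
      (isClosed_eq (continuous_finset_sum _ fun i _ => continuous_apply i) continuous_const)
  have hΔsub : Δ ⊆ Set.Icc (0 : Fin ℓ → ℝ) 1 := by
    rintro x ⟨hx0, hx1⟩
    constructor
    · intro i; exact hx0 i
    · intro i
      calc x i ≤ ∑ j, x j := Finset.single_le_sum (fun j _ => hx0 j) (Finset.mem_univ i)
        _ = 1 := hx1
  have hΔcomp : IsCompact Δ := isCompact_Icc.of_isClosed_subset hΔclosed hΔsub
  obtain ⟨z, hzΔ, hzmin⟩ := hΔcomp.exists_isMinOn hΔne (MvPolynomial.continuous_eval F).continuousOn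
  set ε := MvPolynomial.eval z F with hεdef
  have hεpos : 0 < ε := hFpos z hzΔ.1 hzΔ.2
  have hεle : ∀ x ∈ Δ, ε ≤ MvPolynomial.eval x F := fun x hx => hzmin hx
  set A := ∑ δ ∈ F.support, |MvPolynomial.coeff δ F| with hAdef
  have hA0 : 0 ≤ A := Finset.sum_nonneg fun _ _ => abs_nonneg _
  set p := ⌈A * (e:ℝ)^2 / ε⌉₊ + 1 with hpdef
  refine ⟨p, fun m => ?_⟩
  set N := p + e with hNdef
  have hhomN : ((∑ j, MvPolynomial.X j : MvPolynomial (Fin ℓ) ℝ) ^ p * F).IsHomogeneous N := by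
    have hS : (∑ j, MvPolynomial.X j : MvPolynomial (Fin ℓ) ℝ).IsHomogeneous 1 :=
      MvPolynomial.IsHomogeneous.sum _ _ _ fun i _ => MvPolynomial.isHomogeneous_X _ _
    have := (hS.pow p).mul hF
    rwa [one_mul] at this
  by_cases hdeg : m.degree = N
  swap
  · rw [hhomN.coeff_eq_zero hdeg]
  · have hNm : ∑ i, m i = N := by rw [← degree_eq_sum_univ]; exact hdeg
    have hsupp : ∀ δ ∈ F.support, ∑ i, δ i = e := by
      intro δ hδ
      rw [← degree_eq_sum_univ, Finsupp.degree_eq_weight_one]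
      exact hF (MvPolynomial.mem_support_iff.mp hδ)
    set g : (Fin ℓ →₀ ℕ) → ℝ :=
      fun δ => MvPolynomial.coeff δ F * ∏ i, ((m i).descFactorial (δ i) : ℝ) with hgdef
    -- Key algebraic identity
    have keyE : (∏ i, ((m i).factorial : ℝ))
          * MvPolynomial.coeff m ((∑ j, MvPolynomial.X j : MvPolynomial (Fin ℓ) ℝ) ^ p * F)
        = (p.factorial : ℝ) * ∑ δ ∈ F.support, g δ := by
      rw [MvPolynomial.coeff_mul, Finset.mul_sum]
      have step1 : ∀ q ∈ Finset.HasAntidiagonal.antidiagonal m,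
          (∏ i, ((m i).factorial : ℝ)) *
            (MvPolynomial.coeff q.1 ((∑ j, MvPolynomial.X j : MvPolynomial (Fin ℓ) ℝ) ^ p)
              * MvPolynomial.coeff q.2 F)
          = (p.factorial : ℝ) * g q.2 := by
        rintro ⟨γ, δ⟩ hq
        rw [Finset.HasAntidiagonal.mem_antidiagonal] at hq
        by_cases hδ : MvPolynomial.coeff δ F = 0
        · simp [hgdef, hδ]
        · have hδe : ∑ i, δ i = e := hsupp δ (MvPolynomial.mem_support_iff.mpr hδ)
          have hmi : ∀ i, m i = γ i + δ i := fun i => by rw [← hq]; rfl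
          have hγp : ∑ i, γ i = p := by
            have hsum : ∑ i, γ i + ∑ i, δ i = ∑ i, m i := by
              rw [← Finset.sum_add_distrib]
              exact Finset.sum_congr rfl fun i _ => (hmi i).symm
            omega
          rw [coeff_sum_X_pow, if_pos hγp]
          have h1 : ∀ i : Fin ℓ, (m i).factorial
              = (γ i).factorial * ((m i).descFactorial (δ i)) := by
            intro i
            have hle : δ i ≤ m i := by rw [hmi i]; omega
            rw [← Nat.factorial_mul_descFactorial hle]
            congr 2
            rw [hmi i]; omega
          have hnat : (∏ i, (m i).factorial) * Nat.multinomial Finset.univ ⇑γ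
              = p.factorial * ∏ i, ((m i).descFactorial (δ i)) := by
            calc (∏ i, (m i).factorial) * Nat.multinomial Finset.univ ⇑γ
                = ((∏ i, (γ i).factorial) * Nat.multinomial Finset.univ ⇑γ)
                  * ∏ i, ((m i).descFactorial (δ i)) := by
                  rw [Finset.prod_congr rfl fun i _ => h1 i, Finset.prod_mul_distrib]; ring
              _ = (∑ i, γ i).factorial * ∏ i, ((m i).descFactorial (δ i)) := by
                  rw [Nat.multinomial_spec]
              _ = p.factorial * ∏ i, ((m i).descFactorial (δ i)) := by rw [hγp]
          have hcast := congrArg (Nat.cast : ℕ → ℝ) hnat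
          push_cast at hcast
          simp only [hgdef]
          push_cast
          linear_combination (MvPolynomial.coeff δ F) * hcast
      rw [Finset.sum_congr rfl step1, ← Finset.mul_sum]
      congr 1
      -- reindex antidiagonal to support
      have hinj : ∀ q1 ∈ Finset.HasAntidiagonal.antidiagonal m, ∀ q2 ∈ Finset.HasAntidiagonal.antidiagonal m,
          q1.2 = q2.2 → q1 = q2 := by
        rintro ⟨a1, b1⟩ h1 ⟨a2, b2⟩ h2 hsnd
        rw [Finset.HasAntidiagonal.mem_antidiagonal] at h1 h2
        simp only at hsnd
        subst hsnd
        have : a1 = a2 := by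
          have := h1.trans h2.symm
          exact add_right_cancel this
        rw [this]
      have himg : ∑ q ∈ Finset.HasAntidiagonal.antidiagonal m, g q.2
          = ∑ δ ∈ (Finset.HasAntidiagonal.antidiagonal m).image Prod.snd, g δ :=
        (Finset.sum_image hinj).symm
      rw [himg]
      have hmemI : ∀ δ : Fin ℓ →₀ ℕ, δ ≤ m → δ ∈ (Finset.HasAntidiagonal.antidiagonal m).image Prod.snd := by
        intro δ hle
        exact Finset.mem_image.mpr ⟨(m - δ, δ),
          Finset.HasAntidiagonal.mem_antidiagonal.mpr (tsub_add_cancel_of_le hle), rfl⟩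
      have hgz : ∀ δ : Fin ℓ →₀ ℕ, ¬ δ ≤ m → g δ = 0 := by
        intro δ hle
        obtain ⟨i, hi⟩ : ∃ i, m i < δ i := by
          by_contra h
          push_neg at h
          exact hle (Finsupp.le_def.mpr h)
        have : ((m i).descFactorial (δ i) : ℝ) = 0 := by
          rw [Nat.descFactorial_eq_zero_iff_lt.mpr hi, Nat.cast_zero]
        simp only [hgdef]
        rw [Finset.prod_eq_zero (Finset.mem_univ i) this, mul_zero]
      calc ∑ δ ∈ (Finset.HasAntidiagonal.antidiagonal m).image Prod.snd, g δ
          = ∑ δ ∈ (Finset.HasAntidiagonal.antidiagonal m).image Prod.snd ∪ F.support, g δ := by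
            refine Finset.sum_subset Finset.subset_union_left fun δ hδu hδn => ?_
            rcases Finset.mem_union.mp hδu with h | h
            · exact absurd h hδn
            · apply hgz
              intro hle
              exact hδn (hmemI δ hle)
        _ = ∑ δ ∈ F.support, g δ := by
            symm
            refine Finset.sum_subset Finset.subset_union_right fun δ hδu hδn => ?_
            simp only [hgdef]
            rw [MvPolynomial.notMem_support_iff.mp hδn, zero_mul]
    -- Analytic positivity of the sum
    have hNpos : (0:ℝ) < N := by
      have : 0 < N := by omega
      exact_mod_cast this
    set x : Fin ℓ → ℝ := fun i => (m i : ℝ) / N with hxdef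
    have hx0 : ∀ i, 0 ≤ x i := fun i => by positivity
    have hxsum : ∑ i, x i = 1 := by
      rw [hxdef, ← Finset.sum_div]
      rw [show ∑ i, ((m i : ℕ) : ℝ) = (N:ℝ) by exact_mod_cast congrArg (Nat.cast : ℕ → ℝ) hNm]
      exact div_self hNpos.ne'
    have hxΔ : x ∈ Δ := ⟨hx0, hxsum⟩
    have hx1 : ∀ i, x i ≤ 1 := fun i => (hΔsub hxΔ).2 i
    have heN : (e:ℝ) ≤ N := by
      have : e ≤ N := by omega
      exact_mod_cast this
    have hprodid : ∀ δ ∈ F.support, ∏ i, ((m i).descFactorial (δ i) : ℝ)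
        = (N:ℝ)^e * ∏ i, ∏ j ∈ Finset.range (δ i), (x i - (j:ℝ) / N) := by
      intro δ hδ
      have hδe := hsupp δ hδ
      rw [← hδe, ← Finset.prod_pow_eq_pow_sum, ← Finset.prod_mul_distrib]
      refine Finset.prod_congr rfl fun i _ => ?_
      rw [cast_descFactorial]
      have hNpow : (N:ℝ) ^ δ i = ∏ _j ∈ Finset.range (δ i), (N:ℝ) := by
        rw [Finset.prod_const, Finset.card_range]
      rw [hNpow, ← Finset.prod_mul_distrib]
      refine Finset.prod_congr rfl fun j _ => ?_
      rw [hxdef]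
      field_simp
    have hest : ∀ δ ∈ F.support,
        |(∏ i, ∏ j ∈ Finset.range (δ i), (x i - (j:ℝ) / N)) - ∏ i, x i ^ δ i|
          ≤ (e:ℝ)^2 / N := by
      intro δ hδ
      have hδe := hsupp δ hδ
      have hδle : ∀ i, δ i ≤ e := fun i =>
        hδe ▸ Finset.single_le_sum (fun j _ => Nat.zero_le _) (Finset.mem_univ i)
      have hfac : ∀ i, ∀ j ∈ Finset.range (δ i), |x i - (j:ℝ)/N| ≤ 1 := by
        intro i j hj
        rw [Finset.mem_range] at hj
        have hje : (j:ℝ) ≤ N := by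
          have h1 : (j:ℝ) ≤ (e:ℝ) := by
            have : j ≤ e := le_trans (le_of_lt hj) (hδle i)
            exact_mod_cast this
          linarith
        have h1 : 0 ≤ (j:ℝ)/N := by positivity
        have h2 : (j:ℝ)/N ≤ 1 := by rw [div_le_one hNpos]; exact hje
        rw [abs_le]
        constructor <;> nlinarith [hx0 i, hx1 i]
      have hinner : ∀ i, |(∏ j ∈ Finset.range (δ i), (x i - (j:ℝ)/N)) - x i ^ δ i|
          ≤ (δ i : ℝ) * ((e:ℝ)/N) := by
        intro i
        have hxpow : x i ^ δ i = ∏ _j ∈ Finset.range (δ i), x i := by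
          rw [Finset.prod_const, Finset.card_range]
        rw [hxpow]
        have hc : ∀ j ∈ Finset.range (δ i), |x i| ≤ 1 := by
          intro j _
          rw [abs_le]; constructor <;> nlinarith [hx0 i, hx1 i]
        calc |(∏ j ∈ Finset.range (δ i), (x i - (j:ℝ)/N)) - ∏ _j ∈ Finset.range (δ i), x i|
            ≤ ∑ j ∈ Finset.range (δ i), |x i - (j:ℝ)/N - x i| :=
              abs_prod_sub_prod_le _ _ _ (hfac i) hc
          _ = ∑ j ∈ Finset.range (δ i), (j:ℝ)/N := by
              refine Finset.sum_congr rfl fun j _ => ?_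
              rw [show x i - (j:ℝ)/N - x i = -((j:ℝ)/N) by ring, abs_neg,
                abs_of_nonneg (by positivity)]
          _ ≤ ∑ _j ∈ Finset.range (δ i), (e:ℝ)/N := by
              refine Finset.sum_le_sum fun j hj => ?_
              gcongr
              have : j ≤ e := le_trans (le_of_lt (Finset.mem_range.mp hj)) (hδle i)
              exact_mod_cast this
          _ = (δ i : ℝ) * ((e:ℝ)/N) := by
              rw [Finset.sum_const, Finset.card_range, nsmul_eq_mul]
      have hbO : ∀ i : Fin ℓ, i ∈ Finset.univ →
          |∏ j ∈ Finset.range (δ i), (x i - (j:ℝ)/N)| ≤ 1 := by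
        intro i _
        rw [Finset.abs_prod]
        exact Finset.prod_le_one (fun j _ => abs_nonneg _)
          (fun j hj => hfac i j hj)
      have hcO : ∀ i : Fin ℓ, i ∈ Finset.univ → |x i ^ δ i| ≤ 1 := by
        intro i _
        rw [abs_pow]
        refine pow_le_one₀ (abs_nonneg _) ?_
        rw [abs_le]; constructor <;> nlinarith [hx0 i, hx1 i]
      calc |(∏ i, ∏ j ∈ Finset.range (δ i), (x i - (j:ℝ) / N)) - ∏ i, x i ^ δ i|
          ≤ ∑ i, |(∏ j ∈ Finset.range (δ i), (x i - (j:ℝ)/N)) - x i ^ δ i| :=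
            abs_prod_sub_prod_le _ _ _ hbO hcO
        _ ≤ ∑ i, (δ i : ℝ) * ((e:ℝ)/N) := Finset.sum_le_sum fun i _ => hinner i
        _ = (e:ℝ)^2 / N := by
            rw [← Finset.sum_mul]
            rw [show ∑ i, (δ i : ℝ) = (e:ℝ) by exact_mod_cast congrArg (Nat.cast : ℕ → ℝ) hδe]
            ring
    have heval : MvPolynomial.eval x F
        = ∑ δ ∈ F.support, MvPolynomial.coeff δ F * ∏ i, x i ^ δ i :=
      MvPolynomial.eval_eq' x F
    have hdiff : |(∑ δ ∈ F.support, MvPolynomial.coeff δ F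
          * ∏ i, ∏ j ∈ Finset.range (δ i), (x i - (j:ℝ)/N)) - MvPolynomial.eval x F|
        ≤ A * ((e:ℝ)^2 / N) := by
      rw [heval, ← Finset.sum_sub_distrib]
      refine (Finset.abs_sum_le_sum_abs _ _).trans ?_
      rw [hAdef, Finset.sum_mul]
      refine Finset.sum_le_sum fun δ hδ => ?_
      rw [show MvPolynomial.coeff δ F * (∏ i, ∏ j ∈ Finset.range (δ i), (x i - (j:ℝ)/N))
            - MvPolynomial.coeff δ F * ∏ i, x i ^ δ i
          = MvPolynomial.coeff δ F
            * ((∏ i, ∏ j ∈ Finset.range (δ i), (x i - (j:ℝ)/N)) - ∏ i, x i ^ δ i) by ring,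
        abs_mul]
      exact mul_le_mul_of_nonneg_left (hest δ hδ) (abs_nonneg _)
    have hbound : A * ((e:ℝ)^2 / N) < ε := by
      have h2 : A * (e:ℝ)^2 / ε < (N:ℝ) := by
        have hceil := Nat.le_ceil (A * (e:ℝ)^2 / ε)
        have hpN : ((⌈A * (e:ℝ)^2 / ε⌉₊ : ℝ) + 1) ≤ (N:ℝ) := by
          have h3 : p ≤ N := by omega
          have h4 : ((p:ℕ):ℝ) = ((⌈A * (e:ℝ)^2 / ε⌉₊ : ℝ) + 1) := by
            rw [hpdef]; push_cast; ring
          rw [← h4]; exact_mod_cast h3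
        linarith
      have h5 : A * (e:ℝ)^2 < (N:ℝ) * ε := (div_lt_iff₀ hεpos).mp h2
      rw [mul_div_assoc'] at *
      rw [div_lt_iff₀ hNpos]
      linarith
    have hTpos : 0 ≤ ∑ δ ∈ F.support, g δ := by
      have hT' : ∑ δ ∈ F.support, g δ = (N:ℝ)^e * ∑ δ ∈ F.support, MvPolynomial.coeff δ F
          * ∏ i, ∏ j ∈ Finset.range (δ i), (x i - (j:ℝ)/N) := by
        rw [Finset.mul_sum]
        refine Finset.sum_congr rfl fun δ hδ => ?_
        simp only [hgdef]
        rw [hprodid δ hδ]; ring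
      rw [hT']
      have hεx := hεle x hxΔ
      have habs := neg_le_of_abs_le hdiff
      have hSpos : 0 ≤ ∑ δ ∈ F.support, MvPolynomial.coeff δ F
          * ∏ i, ∏ j ∈ Finset.range (δ i), (x i - (j:ℝ)/N) := by
        nlinarith
      positivity
    have hfacpos : (0:ℝ) < ∏ i, ((m i).factorial : ℝ) :=
      Finset.prod_pos fun i _ => by exact_mod_cast (m i).factorial_pos
    have hpf : (0:ℝ) ≤ (p.factorial : ℝ) * ∑ δ ∈ F.support, g δ :=
      mul_nonneg (by positivity) hTpos
    nlinarith [keyE, hfacpos, hpf]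

set_option maxHeartbeats 2000000 in
theorem stmt17 {ℓ s : ℕ} (u0 : MvPolynomial (Fin ℓ) ℝ)
    (u : Fin s → MvPolynomial (Fin ℓ) ℝ)
    (d0 : ℕ) (d : Fin s → ℕ)
    (h0 : u0.IsHomogeneous d0) (hk : ∀ k, (u k).IsHomogeneous (d k))
    (hpos : ∀ y : Fin ℓ → ℝ, (∀ i, 0 ≤ y i) →
      (∀ k, MvPolynomial.eval y (u k) = 0) → y ≠ 0 →
      0 < MvPolynomial.eval y u0) :
    ∃ (p : ℕ) (τ θ : MvPolynomial (Fin ℓ) ℝ),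
      (∀ m, 0 ≤ τ.coeff m) ∧ θ ∈ Ideal.span (Set.range u) ∧
      (∑ j, MvPolynomial.X j) ^ p * u0 = τ + θ := by
  classical
  rcases Nat.eq_zero_or_pos ℓ with hl | hl
  · subst hl
    refine ⟨1, 0, 0, fun m => by simp, Ideal.zero_mem _, ?_⟩
    have hS : (∑ j : Fin 0, MvPolynomial.X j : MvPolynomial (Fin 0) ℝ) = 0 := by simp
    rw [hS]
    simp
  · set S : MvPolynomial (Fin ℓ) ℝ := ∑ j, MvPolynomial.X j with hSdef
    set e : ℕ := d0 + 2 * ∑ k, d k with hedef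
    have hd0e : d0 ≤ e := by omega
    have hdke : ∀ k, 2 * d k ≤ e := by
      intro k
      have : d k ≤ ∑ j, d j :=
        Finset.single_le_sum (fun j _ => Nat.zero_le _) (Finset.mem_univ k)
      omega
    have hShom : S.IsHomogeneous 1 :=
      MvPolynomial.IsHomogeneous.sum _ _ _ fun i _ => MvPolynomial.isHomogeneous_X _ _
    -- simplex facts
    set Δ : Set (Fin ℓ → ℝ) := {x | (∀ i, 0 ≤ x i) ∧ ∑ i, x i = 1} with hΔdef
    have hΔne : Δ.Nonempty := by
      refine ⟨fun _ => (ℓ : ℝ)⁻¹, fun i => by positivity, ?_⟩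
      rw [Finset.sum_const, Finset.card_univ, Fintype.card_fin, nsmul_eq_mul]
      exact mul_inv_cancel₀ (by exact_mod_cast hl.ne')
    have hΔclosed : IsClosed Δ := by
      have hset : Δ = (⋂ i, {x : Fin ℓ → ℝ | 0 ≤ x i}) ∩ {x | ∑ i, x i = 1} := by
        ext x; simp [hΔdef, Set.mem_iInter]
      rw [hset]
      exact IsClosed.inter
        (isClosed_iInter fun i => isClosed_le continuous_const (continuous_apply i))
        (isClosed_eq (continuous_finset_sum _ fun i _ => continuous_apply i) continuous_const)
    have hΔsub : Δ ⊆ Set.Icc (0 : Fin ℓ → ℝ) 1 := by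
      rintro x ⟨hx0, hx1⟩
      constructor
      · intro i; exact hx0 i
      · intro i
        calc x i ≤ ∑ j, x j := Finset.single_le_sum (fun j _ => hx0 j) (Finset.mem_univ i)
          _ = 1 := hx1
    have hΔcomp : IsCompact Δ := isCompact_Icc.of_isClosed_subset hΔclosed hΔsub
    -- find M
    obtain ⟨M, hM0, hM⟩ : ∃ M : ℝ, 0 ≤ M ∧ ∀ x : Fin ℓ → ℝ, (∀ i, 0 ≤ x i) → ∑ i, x i = 1 →
        0 < MvPolynomial.eval x u0 + M * ∑ k, (MvPolynomial.eval x (u k))^2 := by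
      have hgcont : Continuous fun x : Fin ℓ → ℝ => ∑ k, (MvPolynomial.eval x (u k))^2 :=
        continuous_finset_sum _ fun k _ => (MvPolynomial.continuous_eval (u k)).pow 2
      set K : Set (Fin ℓ → ℝ) := Δ ∩ {x | MvPolynomial.eval x u0 ≤ 0} with hKdef
      have hKcomp : IsCompact K :=
        hΔcomp.inter_right (isClosed_le (MvPolynomial.continuous_eval u0) continuous_const)
      rcases K.eq_empty_or_nonempty with hK | hK
      · refine ⟨0, le_refl 0, fun x hx0 hx1 => ?_⟩
        have hxΔ : x ∈ Δ := ⟨hx0, hx1⟩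
        have hnot : ¬ MvPolynomial.eval x u0 ≤ 0 := fun hmem =>
          Set.eq_empty_iff_forall_notMem.mp hK x ⟨hxΔ, hmem⟩
        have := not_le.mp hnot
        nlinarith
      · obtain ⟨y0, hy0K, hy0min⟩ := hKcomp.exists_isMinOn hK hgcont.continuousOn
        have hδm0 : 0 ≤ ∑ k, (MvPolynomial.eval y0 (u k))^2 :=
          Finset.sum_nonneg fun k _ => sq_nonneg _
        have hδpos : 0 < ∑ k, (MvPolynomial.eval y0 (u k))^2 := by
          rcases lt_or_eq_of_le hδm0 with h | h
          · exact h
          · exfalso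
            have hall := (Finset.sum_eq_zero_iff_of_nonneg
              (fun k (_ : k ∈ Finset.univ) => sq_nonneg (MvPolynomial.eval y0 (u k)))).mp h.symm
            have hz : ∀ k, MvPolynomial.eval y0 (u k) = 0 := fun k =>
              pow_eq_zero_iff (two_ne_zero)|>.mp (hall k (Finset.mem_univ k))
            have hy0ne : y0 ≠ 0 := by
              intro h0
              have hsum1 := hy0K.1.2
              rw [h0] at hsum1
              simp at hsum1
            have h1 := hpos y0 hy0K.1.1 hz hy0ne
            have h2 := hy0K.2
            simp only [Set.mem_setOf_eq] at h2
            linarith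
        obtain ⟨z, hzΔ, hzmin⟩ :=
          hΔcomp.exists_isMinOn hΔne (MvPolynomial.continuous_eval u0).continuousOn
        set B := MvPolynomial.eval z u0 with hBdef
        have hB : B ≤ 0 := le_trans (hzmin hy0K.1) hy0K.2
        refine ⟨(1 - B)/(∑ k, (MvPolynomial.eval y0 (u k))^2),
          div_nonneg (by linarith) hδpos.le,
          fun x hx0 hx1 => ?_⟩
        have hxΔ : x ∈ Δ := ⟨hx0, hx1⟩
        have hgx0 : 0 ≤ ∑ k, (MvPolynomial.eval x (u k))^2 :=
          Finset.sum_nonneg fun k _ => sq_nonneg _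
        by_cases hcase : MvPolynomial.eval x u0 ≤ 0
        · have hxK : x ∈ K := ⟨hxΔ, hcase⟩
          have h1 : ∑ k, (MvPolynomial.eval y0 (u k))^2 ≤ ∑ k, (MvPolynomial.eval x (u k))^2 :=
            hy0min hxK
          have h2 : B ≤ MvPolynomial.eval x u0 := hzmin hxΔ
          have h3 : (1-B)/(∑ k, (MvPolynomial.eval y0 (u k))^2)
              * (∑ k, (MvPolynomial.eval y0 (u k))^2) = 1 - B :=
            div_mul_cancel₀ _ hδpos.ne'
          have h4 : (1-B)/(∑ k, (MvPolynomial.eval y0 (u k))^2)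
                * (∑ k, (MvPolynomial.eval y0 (u k))^2)
              ≤ (1-B)/(∑ k, (MvPolynomial.eval y0 (u k))^2)
                * (∑ k, (MvPolynomial.eval x (u k))^2) :=
            mul_le_mul_of_nonneg_left h1 (div_nonneg (by linarith) hδpos.le)
          rw [h3] at h4
          linarith
        · push_neg at hcase
          have h5 : 0 ≤ (1-B)/(∑ k, (MvPolynomial.eval y0 (u k))^2)
              * ∑ k, (MvPolynomial.eval x (u k))^2 :=
            mul_nonneg (div_nonneg (by linarith) hδpos.le) hgx0
          linarith
    -- build F
    set F : MvPolynomial (Fin ℓ) ℝ :=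
      S ^ (e - d0) * u0 + MvPolynomial.C M * ∑ k, S ^ (e - 2 * d k) * (u k)^2 with hFdef
    have hFhom : F.IsHomogeneous e := by
      apply MvPolynomial.IsHomogeneous.add
      · have h := (hShom.pow (e - d0)).mul h0
        rwa [one_mul, Nat.sub_add_cancel hd0e] at h
      · have hsum : (∑ k, S ^ (e - 2*d k) * (u k)^2 : MvPolynomial (Fin ℓ) ℝ).IsHomogeneous e := by
          apply MvPolynomial.IsHomogeneous.sum
          intro k _
          have h := (hShom.pow (e - 2*d k)).mul ((hk k).pow 2)
          rwa [one_mul, show d k * 2 = 2 * d k by ring, Nat.sub_add_cancel (hdke k)] at h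
        have h := (MvPolynomial.isHomogeneous_C (Fin ℓ) M).mul hsum
        rwa [zero_add] at h
    have hFpos : ∀ x : Fin ℓ → ℝ, (∀ i, 0 ≤ x i) → ∑ i, x i = 1 →
        0 < MvPolynomial.eval x F := by
      intro x hx0 hx1
      have hevS : MvPolynomial.eval x S = 1 := by
        rw [hSdef, map_sum]
        simpa using hx1
      have hev : MvPolynomial.eval x F
          = MvPolynomial.eval x u0 + M * ∑ k, (MvPolynomial.eval x (u k))^2 := by
        rw [hFdef, map_add, map_mul, map_mul, map_pow, hevS, one_pow, one_mul, map_sum,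
          MvPolynomial.eval_C]
        congr 1
        congr 1
        refine Finset.sum_congr rfl fun k _ => ?_
        rw [map_mul, map_pow, map_pow, hevS, one_pow, one_mul]
      rw [hev]
      exact hM x hx0 hx1
    obtain ⟨p, hp⟩ := polya_lemma hl F e hFhom hFpos
    refine ⟨p + (e - d0), S ^ p * F,
      -(MvPolynomial.C M * ∑ k, S ^ (p + (e - 2*d k)) * ((u k) * (u k))), hp, ?_, ?_⟩
    · apply neg_mem
      rw [Finset.mul_sum]
      apply Ideal.sum_mem
      intro k _
      have hmem : u k ∈ Ideal.span (Set.range u) := Ideal.subset_span ⟨k, rfl⟩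
      have h := Ideal.mul_mem_left (Ideal.span (Set.range u))
        (MvPolynomial.C M * (S ^ (p + (e - 2*d k)) * u k)) hmem
      convert h using 1
      ring
    · have h3 : MvPolynomial.C M * ∑ k, S ^ (p + (e - 2*d k)) * ((u k) * (u k))
          = S ^ p * (MvPolynomial.C M * ∑ k, S ^ (e - 2*d k) * (u k)^2) := by
        rw [Finset.mul_sum, Finset.mul_sum, Finset.mul_sum]
        refine Finset.sum_congr rfl fun k _ => ?_
        rw [pow_add]; ring
      rw [hFdef, mul_add, h3, pow_add]
      ring
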